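/- Let G be a second countable locally compact Hausdorff Cartan groupoid with open range and source maps, let U ⊆ G⁰ be an open wandering set, and let V = [U] be its saturation. Then the orbit spaces U/(G|_U) and V/(G|_V) are homeomorphic, via the map sending the G|_U-orbit of x ∈ U to its G|_V-orbit. -/

import Mathlib

/-- A topological groupoid, modelled by a space `G` of arrows and a space `G0` of units,
with continuous range and source maps `r, s`, a continuous inversion, a continuous
partially-defined multiplication, and a unit map. -/
structure TopGroupoid (G G0 : Type*) [TopologicalSpace G] [TopologicalSpace G0] where
  r : G → G0
  s : G → G0
  inv : G → G
  mul : (γ η : G) → s γ = r η → G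
  unit : G0 → G
  continuous_r : Continuous r
  continuous_s : Continuous s
  continuous_inv : Continuous inv
  continuous_mul : Continuous fun p : {p : G × G // s p.1 = r p.2} => mul p.1.1 p.1.2 p.2
  r_unit : ∀ u, r (unit u) = u
  s_unit : ∀ u, s (unit u) = u
  r_mul : ∀ γ η h, r (mul γ η h) = r γ
  s_mul : ∀ γ η h, s (mul γ η h) = s η
  r_inv : ∀ γ, r (inv γ) = s γ
  s_inv : ∀ γ, s (inv γ) = r γ
  inv_mul : ∀ γ, mul (inv γ) γ (s_inv γ) = unit (s γ)
  mul_inv : ∀ γ, mul γ (inv γ) (r_inv γ).symm = unit (r γ)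

/-- for a second countable locally compact Hausdorff Cartan groupoid with open
range and source maps, if `U` is an open wandering set and `V = [U]` its saturation, then the
orbit spaces `U/(G|_U)` and `V/(G|_V)` are homeomorphic via the map sending the `G|_U`-orbit
of `x ∈ U` to its `G|_V`-orbit. -/
theorem orbitSpace_saturation_homeomorph {G G0 : Type*}
    [TopologicalSpace G] [TopologicalSpace G0]
    [T2Space G] [LocallyCompactSpace G] [SecondCountableTopology G]
    [T2Space G0] [LocallyCompactSpace G0] [SecondCountableTopology G0]
    (𝒢 : TopGroupoid G G0) (hr : IsOpenMap 𝒢.r) (hs : IsOpenMap 𝒢.s)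
    (cartan : ∀ x : G0, ∃ N ∈ nhds x,
      IsCompact (closure {γ : G | 𝒢.r γ ∈ N ∧ 𝒢.s γ ∈ N}))
    (U : Set G0) (hU : IsOpen U)
    (hUwand : IsCompact (closure {γ : G | 𝒢.r γ ∈ U ∧ 𝒢.s γ ∈ U}))
    (V : Set G0) (hV : V = 𝒢.s '' (𝒢.r ⁻¹' U))
    (hUV : U ⊆ V) :
    ∃ h : Quot (fun x y : U => ∃ γ : G, 𝒢.r γ = (x : G0) ∧ 𝒢.s γ = (y : G0)) ≃ₜ
        Quot (fun x y : V => ∃ γ : G, 𝒢.r γ = (x : G0) ∧ 𝒢.s γ = (y : G0)),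
      ∀ x : U, h (Quot.mk _ x) = Quot.mk _ (⟨(x : G0), hUV x.2⟩ : V) := by

  classical
  have equivW : ∀ (W : Set G0),
      Equivalence (fun x y : W => ∃ γ : G, 𝒢.r γ = (x : G0) ∧ 𝒢.s γ = (y : G0)) := by
    intro W
    constructor
    · intro x; exact ⟨𝒢.unit x, 𝒢.r_unit x, 𝒢.s_unit x⟩
    · rintro x y ⟨γ, h1, h2⟩
      exact ⟨𝒢.inv γ, by rw [𝒢.r_inv, h2], by rw [𝒢.s_inv, h1]⟩
    · rintro x y z ⟨γ, h1, h2⟩ ⟨η, h3, h4⟩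
      exact ⟨𝒢.mul γ η (h2.trans h3.symm), by rw [𝒢.r_mul]; exact h1,
        by rw [𝒢.s_mul]; exact h4⟩
  have mkeq : ∀ (W : Set G0) (a b : W),
      Quot.mk (fun x y : W => ∃ γ : G, 𝒢.r γ = (x : G0) ∧ 𝒢.s γ = (y : G0)) a =
      Quot.mk _ b ↔ ∃ γ : G, 𝒢.r γ = (a : G0) ∧ 𝒢.s γ = (b : G0) := by
    intro W a b
    rw [Quot.eq, (equivW W).eqvGen_iff]
  set RU := fun x y : U => ∃ γ : G, 𝒢.r γ = (x : G0) ∧ 𝒢.s γ = (y : G0) with hRU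
  set RV := fun x y : V => ∃ γ : G, 𝒢.r γ = (x : G0) ∧ 𝒢.s γ = (y : G0) with hRV
  have fsound : ∀ a b : U, RU a b →
      Quot.mk RV ⟨(a : G0), hUV a.2⟩ = Quot.mk RV ⟨(b : G0), hUV b.2⟩ := by
    rintro a b ⟨γ, h1, h2⟩; exact Quot.sound ⟨γ, h1, h2⟩
  set f : Quot RU → Quot RV :=
    Quot.lift (fun x : U => Quot.mk RV ⟨(x : G0), hUV x.2⟩) fsound with hf
  have hinj : Function.Injective f := by
    intro a b
    induction a using Quot.ind with | _ x =>
    induction b using Quot.ind with | _ y =>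
    intro h
    have h' := (mkeq V _ _).mp h
    exact Quot.sound ((hRU ▸ h' : RU x y))
  have hsurj : Function.Surjective f := by
    intro b
    induction b using Quot.ind with | _ v =>
    have hv : (v : G0) ∈ 𝒢.s '' (𝒢.r ⁻¹' U) := hV ▸ v.2
    obtain ⟨γ, hγU, hγv⟩ := hv
    refine ⟨Quot.mk RU ⟨𝒢.r γ, hγU⟩, ?_⟩
    exact Quot.sound ⟨γ, rfl, hγv⟩
  have hcont : Continuous f :=
    continuous_quot_lift fsound (continuous_quot_mk.comp
      (Continuous.subtype_mk continuous_subtype_val _))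
  have hopen : IsOpenMap f := by
    intro A hA
    rw [← isQuotientMap_quot_mk.isOpen_preimage]
    have hB : IsOpen (Quot.mk RU ⁻¹' A) := hA.preimage continuous_quot_mk
    set Atil : Set G0 := Subtype.val '' (Quot.mk RU ⁻¹' A) with hAtil
    have hAtilOpen : IsOpen Atil := hU.isOpenMap_subtype_val _ hB
    have hS : IsOpen (𝒢.s '' (𝒢.r ⁻¹' Atil)) :=
      hs _ (hAtilOpen.preimage 𝒢.continuous_r)
    have hkey : Quot.mk RV ⁻¹' (f '' A) =
        Subtype.val ⁻¹' (𝒢.s '' (𝒢.r ⁻¹' Atil)) := by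
      ext v
      constructor
      · rintro ⟨a, ha, hfa⟩
        obtain ⟨x, rfl⟩ := Quot.exists_rep a
        have h' := (mkeq V _ _).mp hfa
        obtain ⟨γ, h1, h2⟩ := h'
        exact ⟨γ, by show 𝒢.r γ ∈ Atil; rw [h1]; exact ⟨x, ha, rfl⟩, h2⟩
      · rintro ⟨γ, hγA, hγv⟩
        obtain ⟨x, hxB, hxval⟩ := hγA
        refine ⟨Quot.mk RU x, hxB, ?_⟩
        exact Quot.sound ⟨γ, hxval.symm, hγv⟩
    rw [hkey]
    exact hS.preimage continuous_subtype_val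
  refine ⟨Equiv.toHomeomorphOfContinuousOpen
    (Equiv.ofBijective f ⟨hinj, hsurj⟩) hcont hopen, fun x => rfl⟩
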